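/- For all x ∈ ℝ^{d_x} and y, v ∈ ℝ^{d_y}: ‖y − y*(x)‖² + ‖v − v*(x)‖² ≤ [1/μ² + (2/μ⁴)(L_{g,2}C_{f_y}/μ + L_{f,1})²]·‖∇_y g(x,y)‖² + (2/μ²)·‖∇_v R(x,y,v)‖². -/

import Mathlib

noncomputable section

open scoped RealInnerProductSpace

variable {dx dy : ℕ}

/-- Partial gradient in the first argument. -/
def gX (f : EuclideanSpace ℝ (Fin dx) → EuclideanSpace ℝ (Fin dy) → ℝ)
    (x : EuclideanSpace ℝ (Fin dx)) (y : EuclideanSpace ℝ (Fin dy)) :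
    EuclideanSpace ℝ (Fin dx) :=
  gradient (fun x' => f x' y) x

/-- Partial gradient in the second argument. -/
def gY (f : EuclideanSpace ℝ (Fin dx) → EuclideanSpace ℝ (Fin dy) → ℝ)
    (x : EuclideanSpace ℝ (Fin dx)) (y : EuclideanSpace ℝ (Fin dy)) :
    EuclideanSpace ℝ (Fin dy) :=
  gradient (fun y' => f x y') y

/-- Second derivative `∇_y∇_y g (x,y)` as a linear map `ℝ^{d_y} → ℝ^{d_y}`. -/
def gYY (g : EuclideanSpace ℝ (Fin dx) → EuclideanSpace ℝ (Fin dy) → ℝ)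
    (x : EuclideanSpace ℝ (Fin dx)) (y : EuclideanSpace ℝ (Fin dy)) :
    EuclideanSpace ℝ (Fin dy) →L[ℝ] EuclideanSpace ℝ (Fin dy) :=
  fderiv ℝ (fun y' => gY g x y') y

/-- `∇_v R(x,y,v) = ∇_y∇_y g(x,y) v − ∇_y f(x,y)`. -/
def gradVR (f g : EuclideanSpace ℝ (Fin dx) → EuclideanSpace ℝ (Fin dy) → ℝ)
    (x : EuclideanSpace ℝ (Fin dx)) (y v : EuclideanSpace ℝ (Fin dy)) :
    EuclideanSpace ℝ (Fin dy) :=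
  gYY g x y v - gY f x y

section Auxiliary

open InnerProductSpace Set

variable {E : Type*} [NormedAddCommGroup E] [InnerProductSpace ℝ E] [CompleteSpace E]

lemma aux_cancel (μ a b : ℝ) (ha : 0 ≤ a) (hb : 0 ≤ b) (h : μ * a ^ 2 ≤ b * a) : μ * a ≤ b := by
  rcases ha.eq_or_lt with h0 | h0
  · simpa [← h0] using hb
  · have : μ * a * a ≤ b * a := by nlinarith
    exact le_of_mul_le_mul_right this h0

/-- The dual-to-primal map as a genuinely ℝ-linear continuous map. -/
def qmap : (E →L[ℝ] ℝ) →L[ℝ] E :=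
  LinearMap.mkContinuous
    { toFun := fun L => (toDual ℝ E).symm L
      map_add' := fun L M => by simp
      map_smul' := fun c L => by simp }
    1 (fun L => by simp)

lemma gradient_eq_qmap (f : E → ℝ) (y : E) : gradient f y = qmap (fderiv ℝ f y) := rfl

lemma grad_strongmono {f : E → ℝ} (hdiff : Differentiable ℝ f) {μ : ℝ}
    (hsc : StrongConvexOn Set.univ μ f) (a b : E) :
    μ * ‖b - a‖ ^ 2 ≤ ⟪gradient f b - gradient f a, b - a⟫_ℝ := by
  set d := b - a with hd
  have hconv : ConvexOn ℝ Set.univ fun y => f y - μ / 2 * ‖y‖ ^ 2 :=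
    strongConvexOn_iff_convex.mp hsc
  set φ : ℝ → ℝ := fun t => f (a + t • d) - μ / 2 * (‖a‖ ^ 2 + 2 * ⟪a, d⟫_ℝ * t + ‖d‖ ^ 2 * t ^ 2)
    with hφ
  have hexp : ∀ t : ℝ, ‖a + t • d‖ ^ 2 = ‖a‖ ^ 2 + 2 * ⟪a, d⟫_ℝ * t + ‖d‖ ^ 2 * t ^ 2 := by
    intro t
    rw [norm_add_sq_real, real_inner_smul_right, norm_smul]
    simp [mul_pow]
    ring
  have hφconv : ConvexOn ℝ Set.univ φ := by
    have h1 := hconv.comp_affineMap (AffineMap.lineMap a b : ℝ →ᵃ[ℝ] E)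
    have h2 : ((fun y => f y - μ / 2 * ‖y‖ ^ 2) ∘ (AffineMap.lineMap a b : ℝ →ᵃ[ℝ] E)) = φ := by
      funext t
      simp only [Function.comp_apply, AffineMap.lineMap_apply_module, hφ]
      have h3 : (1 - t) • a + t • b = a + t • d := by
        rw [hd]; module
      rw [h3, hexp]
    rw [h2, Set.preimage_univ] at h1
    exact h1
  have hderiv : ∀ t : ℝ, HasDerivAt φ
      (⟪gradient f (a + t • d), d⟫_ℝ - μ / 2 * (2 * ⟪a, d⟫_ℝ + ‖d‖ ^ 2 * (2 * t))) t := by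
    intro t
    have hL : HasDerivAt (fun s : ℝ => a + s • d) d t := by
      simpa using ((hasDerivAt_id t).smul_const d).const_add a
    have hfd : HasFDerivAt f (toDual ℝ E (gradient f (a + t • d))) (a + t • d) :=
      hasGradientAt_iff_hasFDerivAt.mp (hdiff _).hasGradientAt
    have h1 : HasDerivAt (fun s : ℝ => f (a + s • d)) (⟪gradient f (a + t • d), d⟫_ℝ) t := by
      simpa [toDual_apply_apply, Function.comp_def] using hfd.comp_hasDerivAt t hL
    have h2 : HasDerivAt (fun s : ℝ => ‖a‖ ^ 2 + 2 * ⟪a, d⟫_ℝ * s + ‖d‖ ^ 2 * s ^ 2)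
        (2 * ⟪a, d⟫_ℝ + ‖d‖ ^ 2 * (2 * t)) t := by
      have := ((hasDerivAt_id t).const_mul (2 * ⟪a, d⟫_ℝ)).const_add (‖a‖ ^ 2)
      have h3 := (hasDerivAt_pow 2 t).const_mul (‖d‖ ^ 2)
      simpa [mul_comm, pow_one, Pi.add_def] using this.add h3
    simpa [Pi.sub_def, hφ] using h1.sub (h2.const_mul (μ / 2))
  have hmono := hφconv.monotoneOn_deriv (fun s _ => (hderiv s).differentiableAt)
  have h01 := hmono (mem_univ (0 : ℝ)) (mem_univ (1 : ℝ)) zero_le_one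
  rw [(hderiv 0).deriv, (hderiv 1).deriv] at h01
  have hab : a + (1 : ℝ) • d = b := by rw [hd]; simp
  have ha0 : a + (0 : ℝ) • d = a := by simp
  rw [hab, ha0] at h01
  rw [inner_sub_left]
  nlinarith [h01]

end Auxiliary

lemma final_arith (μ K A B C D Gn R : ℝ) (hμ : 0 < μ)
    (hA0 : 0 ≤ A) (hB0 : 0 ≤ B) (hC0 : 0 ≤ C) (hD0 : 0 ≤ D)
    (h1 : μ * A ≤ Gn) (h2 : μ * B ≤ R) (h3 : μ * C ≤ K * A) (hD : D ≤ B + C) :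
    A ^ 2 + D ^ 2 ≤ (1 / μ ^ 2 + 2 / μ ^ 4 * K ^ 2) * Gn ^ 2 + 2 / μ ^ 2 * R ^ 2 := by
  have hμ2 : (0:ℝ) < μ ^ 2 := pow_pos hμ 2
  have hμ4 : (0:ℝ) < μ ^ 4 := pow_pos hμ 4
  have hA2 : μ ^ 2 * A ^ 2 ≤ Gn ^ 2 := by
    nlinarith [mul_self_le_mul_self (mul_nonneg hμ.le hA0) h1]
  have hB2 : μ ^ 2 * B ^ 2 ≤ R ^ 2 := by
    nlinarith [mul_self_le_mul_self (mul_nonneg hμ.le hB0) h2]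
  have hC2 : μ ^ 2 * C ^ 2 ≤ K ^ 2 * A ^ 2 := by
    nlinarith [mul_self_le_mul_self (mul_nonneg hμ.le hC0) h3]
  have hD2 : D ^ 2 ≤ (B + C) ^ 2 := by
    nlinarith [mul_self_le_mul_self hD0 hD]
  have key : μ ^ 4 * (A ^ 2 + D ^ 2) ≤ μ ^ 2 * Gn ^ 2 + 2 * K ^ 2 * Gn ^ 2 + 2 * μ ^ 2 * R ^ 2 := by
    have t1 := mul_le_mul_of_nonneg_left hA2 hμ2.le
    have t2 := mul_le_mul_of_nonneg_left hB2 hμ2.le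
    have t3 := mul_le_mul_of_nonneg_left hC2 hμ2.le
    have t4 := mul_le_mul_of_nonneg_left hA2 (sq_nonneg K)
    have t5 := mul_le_mul_of_nonneg_left hD2 hμ4.le
    have t6 : μ ^ 4 * (B + C) ^ 2 ≤ μ ^ 4 * (2 * B ^ 2 + 2 * C ^ 2) :=
      mul_le_mul_of_nonneg_left (by nlinarith [sq_nonneg (B - C)]) hμ4.le
    nlinarith [t1, t2, t3, t4, t5, t6]
  have hRHS : (1 / μ ^ 2 + 2 / μ ^ 4 * K ^ 2) * Gn ^ 2 + 2 / μ ^ 2 * R ^ 2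
      = (μ ^ 2 * Gn ^ 2 + 2 * K ^ 2 * Gn ^ 2 + 2 * μ ^ 2 * R ^ 2) / μ ^ 4 := by
    field_simp
  rw [hRHS, le_div_iff₀ hμ4]
  linarith [key]

/-- the approximation gaps are controlled by the gradient norms
`‖∇_y g(x,y)‖` and `‖∇_v R(x,y,v)‖`. -/
theorem gaps_from_gradient_norms
    (f g : EuclideanSpace ℝ (Fin dx) → EuclideanSpace ℝ (Fin dy) → ℝ)
    (hf : ContDiff ℝ 2 (Function.uncurry f)) (hg : ContDiff ℝ 2 (Function.uncurry g))
    (μ Lf1 Lg2 Cfy : ℝ) (hμ : 0 < μ)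
    (hsc : ∀ x, StrongConvexOn Set.univ μ (fun y => g x y))
    (hfx_lip : ∀ x₁ y₁ x₂ y₂, ‖gX f x₁ y₁ - gX f x₂ y₂‖ ≤ Lf1 * (‖x₁ - x₂‖ + ‖y₁ - y₂‖))
    (hfy_lip : ∀ x₁ y₁ x₂ y₂, ‖gY f x₁ y₁ - gY f x₂ y₂‖ ≤ Lf1 * (‖x₁ - x₂‖ + ‖y₁ - y₂‖))
    (hgyy_lip : ∀ x₁ y₁ x₂ y₂, ‖gYY g x₁ y₁ - gYY g x₂ y₂‖ ≤ Lg2 * (‖x₁ - x₂‖ + ‖y₁ - y₂‖))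
    (hfy_bd : ∀ x y, ‖gY f x y‖ ≤ Cfy)
    (ystar : EuclideanSpace ℝ (Fin dx) → EuclideanSpace ℝ (Fin dy))
    (hystar : ∀ x y, g x (ystar x) ≤ g x y)
    (vhat : EuclideanSpace ℝ (Fin dx) → EuclideanSpace ℝ (Fin dy) → EuclideanSpace ℝ (Fin dy))
    (hvhat : ∀ x y, gYY g x y (vhat x y) = gY f x y) :
    ∀ x y v,
      ‖y - ystar x‖ ^ 2 + ‖v - vhat x (ystar x)‖ ^ 2
        ≤ (1 / μ ^ 2 + (2 / μ ^ 4) * (Lg2 * Cfy / μ + Lf1) ^ 2) * ‖gY g x y‖ ^ 2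
          + (2 / μ ^ 2) * ‖gradVR f g x y v‖ ^ 2 := by
  intro x y v
  set G : EuclideanSpace ℝ (Fin dy) → ℝ := fun y' => g x y' with hG
  have hG2 : ContDiff ℝ 2 G := by
    have h := hg.comp (ContDiff.prodMk (contDiff_const (c := x)) contDiff_id)
    exact h
  have hGdiff : Differentiable ℝ G := hG2.differentiable (by norm_num)
  have hgY_eq : ∀ y', gY g x y' = gradient G y' := fun _ => rfl
  -- differentiability of the gradient of G
  have hfd_cd : ContDiff ℝ 1 (fderiv ℝ G) := hG2.fderiv_right (le_refl 2)
  have hgrad_diff : Differentiable ℝ (fun y' => gradient G y') := by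
    have : (fun y' => gradient G y') = fun y' => qmap (fderiv ℝ G y') := by
      funext y'; exact gradient_eq_qmap G y'
    rw [this]
    exact qmap.differentiable.comp (hfd_cd.differentiable one_ne_zero)
  have hgYY_fd : ∀ y', HasFDerivAt (gY g x) (gYY g x y') y' := by
    intro y'
    exact (hgrad_diff y').hasFDerivAt
  set yst := ystar x with hyst
  -- Step A: strong monotonicity of gY g x
  have hmonoA : ∀ a b : EuclideanSpace ℝ (Fin dy), μ * ‖b - a‖ ^ 2 ≤ ⟪gY g x b - gY g x a, b - a⟫ := by
    intro a b
    exact grad_strongmono hGdiff (hsc x) a b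
  -- Step B: gradient vanishes at minimizer
  have hB : gY g x yst = 0 := by
    have hmin : IsLocalMin G yst := Filter.Eventually.of_forall (fun y' => hystar x y')
    have h0 : fderiv ℝ G yst = 0 := hmin.fderiv_eq_zero
    rw [hgY_eq, gradient_eq_qmap, h0, map_zero]
  -- Step C: Hessian lower bound
  have hessLB : ∀ (y' w : EuclideanSpace ℝ (Fin dy)), μ * ‖w‖ ^ 2 ≤ ⟪gYY g x y' w, w⟫ := by
    intro y' w
    set ψ : ℝ → ℝ := fun t => ⟪gY g x (y' + t • w), w⟫ with hψdef
    have hL : HasDerivAt (fun s : ℝ => y' + s • w) w 0 := by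
      simpa using ((hasDerivAt_id (0 : ℝ)).smul_const w).const_add y'
    have hcomp : HasDerivAt (fun t : ℝ => gY g x (y' + t • w)) (gYY g x y' w) 0 := by
      have h := (hgYY_fd (y' + (0 : ℝ) • w)).comp_hasDerivAt 0 hL
      simpa [Function.comp_def] using h
    have hψ : HasDerivAt ψ (⟪gYY g x y' w, w⟫) 0 := by
      have := hcomp.inner ℝ (hasDerivAt_const (0 : ℝ) w)
      simpa using this
    have hslope : ∀ t ∈ Set.Ioi (0 : ℝ), μ * ‖w‖ ^ 2 ≤ slope ψ 0 t := by
      intro t ht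
      have ht0 : (0 : ℝ) < t := ht
      have hA := hmonoA y' (y' + t • w)
      have hsub : y' + t • w - y' = t • w := by abel
      rw [hsub] at hA
      rw [real_inner_smul_right] at hA
      have hnorm : ‖t • w‖ ^ 2 = t ^ 2 * ‖w‖ ^ 2 := by
        rw [norm_smul, mul_pow, Real.norm_eq_abs, sq_abs]
      rw [hnorm] at hA
      have hψt : ψ t - ψ 0 = ⟪gY g x (y' + t • w) - gY g x y', w⟫ := by
        simp [hψdef, inner_sub_left]
      have hst : slope ψ 0 t = (ψ t - ψ 0) / t := by
        rw [slope_def_field, sub_zero]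
      rw [hst, hψt, le_div_iff₀ ht0]
      nlinarith [hA, ht0]
    have htend : Filter.Tendsto (slope ψ 0) (nhdsWithin 0 (Set.Ioi (0:ℝ)))
        (nhds (⟪gYY g x y' w, w⟫)) := by
      have h1 := hasDerivAt_iff_tendsto_slope.mp hψ
      exact h1.mono_left (nhdsWithin_mono 0 (fun t ht => ne_of_gt ht))
    exact ge_of_tendsto htend
      (Filter.eventually_iff_exists_mem.mpr ⟨Set.Ioi 0, self_mem_nhdsWithin, hslope⟩)
  -- h1 : μ‖y - yst‖ ≤ ‖gY g x y‖
  have h1 : μ * ‖y - yst‖ ≤ ‖gY g x y‖ := by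
    apply aux_cancel _ _ _ (norm_nonneg _) (norm_nonneg _)
    have := hmonoA yst y
    rw [hB, sub_zero] at this
    exact this.trans (real_inner_le_norm _ _)
  -- h2 : μ‖v - vhat x y‖ ≤ ‖gradVR f g x y v‖
  have h2 : μ * ‖v - vhat x y‖ ≤ ‖gradVR f g x y v‖ := by
    apply aux_cancel _ _ _ (norm_nonneg _) (norm_nonneg _)
    have hgw : gYY g x y (v - vhat x y) = gradVR f g x y v := by
      rw [map_sub, hvhat]; rfl
    calc μ * ‖v - vhat x y‖ ^ 2 ≤ ⟪gYY g x y (v - vhat x y), v - vhat x y⟫ := hessLB y _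
      _ ≤ ‖gYY g x y (v - vhat x y)‖ * ‖v - vhat x y‖ := real_inner_le_norm _ _
      _ = ‖gradVR f g x y v‖ * ‖v - vhat x y‖ := by rw [hgw]
  -- hE : ‖vhat x yst‖ ≤ Cfy / μ
  have hCfy : 0 ≤ Cfy := (norm_nonneg _).trans (hfy_bd x yst)
  have hE : ‖vhat x yst‖ ≤ Cfy / μ := by
    rw [le_div_iff₀ hμ, mul_comm]
    apply aux_cancel _ _ _ (norm_nonneg _) hCfy
    calc μ * ‖vhat x yst‖ ^ 2 ≤ ⟪gYY g x yst (vhat x yst), vhat x yst⟫ := hessLB yst _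
      _ = ⟪gY f x yst, vhat x yst⟫ := by rw [hvhat]
      _ ≤ ‖gY f x yst‖ * ‖vhat x yst‖ := real_inner_le_norm _ _
      _ ≤ Cfy * ‖vhat x yst‖ := by
          exact mul_le_mul_of_nonneg_right (hfy_bd x yst) (norm_nonneg _)
  -- h3 : μ‖vhat x y - vhat x yst‖ ≤ (Lg2 * Cfy / μ + Lf1) * ‖y - yst‖
  have h3 : μ * ‖vhat x y - vhat x yst‖ ≤ (Lg2 * Cfy / μ + Lf1) * ‖y - yst‖ := by
    have hstep : μ * ‖vhat x y - vhat x yst‖ ≤ ‖gYY g x y (vhat x y - vhat x yst)‖ := by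
      apply aux_cancel _ _ _ (norm_nonneg _) (norm_nonneg _)
      exact (hessLB y _).trans (real_inner_le_norm _ _)
    have hrw : gYY g x y (vhat x y - vhat x yst)
        = (gY f x y - gY f x yst) + (gYY g x yst - gYY g x y) (vhat x yst) := by
      rw [map_sub, hvhat, ContinuousLinearMap.sub_apply, hvhat]
      abel
    have hb1 : ‖gY f x y - gY f x yst‖ ≤ Lf1 * ‖y - yst‖ := by
      have := hfy_lip x y x yst
      simpa using this
    have hb2 : ‖(gYY g x yst - gYY g x y) (vhat x yst)‖ ≤ (Lg2 * ‖y - yst‖) * (Cfy / μ) := by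
      calc ‖(gYY g x yst - gYY g x y) (vhat x yst)‖
          ≤ ‖gYY g x yst - gYY g x y‖ * ‖vhat x yst‖ :=
            ContinuousLinearMap.le_opNorm _ _
        _ ≤ (Lg2 * ‖y - yst‖) * (Cfy / μ) := by
            have hop : ‖gYY g x yst - gYY g x y‖ ≤ Lg2 * ‖y - yst‖ := by
              have h := hgyy_lip x yst x y
              rw [sub_self, norm_zero, zero_add, norm_sub_rev yst y] at h
              exact h
            exact mul_le_mul hop hE (norm_nonneg _) ((norm_nonneg _).trans hop)
    calc μ * ‖vhat x y - vhat x yst‖ ≤ ‖gYY g x y (vhat x y - vhat x yst)‖ := hstep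
      _ ≤ ‖gY f x y - gY f x yst‖ + ‖(gYY g x yst - gYY g x y) (vhat x yst)‖ := by
          rw [hrw]; exact norm_add_le _ _
      _ ≤ Lf1 * ‖y - yst‖ + (Lg2 * ‖y - yst‖) * (Cfy / μ) := add_le_add hb1 hb2
      _ = (Lg2 * Cfy / μ + Lf1) * ‖y - yst‖ := by ring
  -- final arithmetic
  have hD : ‖v - vhat x yst‖ ≤ ‖v - vhat x y‖ + ‖vhat x y - vhat x yst‖ := by
    have hsplit : v - vhat x yst = (v - vhat x y) + (vhat x y - vhat x yst) := by abel
    rw [hsplit]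
    exact norm_add_le _ _
  exact final_arith μ (Lg2 * Cfy / μ + Lf1) (‖y - yst‖) (‖v - vhat x y‖)
    (‖vhat x y - vhat x yst‖) (‖v - vhat x yst‖) (‖gY g x y‖) (‖gradVR f g x y v‖) hμ
    (norm_nonneg _) (norm_nonneg _) (norm_nonneg _) (norm_nonneg _) h1 h2 h3 hD
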